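/- Let A ∈ ℝ^{n×n}, B ∈ ℝ^{n×m}, Q ∈ ℝ^{n×n} symmetric positive semidefinite, R ∈ ℝ^{m×m} symmetric positive definite, and W ∈ ℝ^{n×n} symmetric. Let K ∈ ℝ^{m×n}, let X ∈ ℝ^{n×n} be symmetric positive definite and satisfy (A+BK)X(A+BK)ᵀ − X + W = 0, and let P ∈ ℝ^{n×n} be symmetric positive semidefinite and satisfy (A+BK)ᵀP(A+BK) − P + Q + KᵀRK = 0. If the stationarity condition ((R+BᵀPB)K + BᵀPA)X = 0 holds, then R + BᵀPB is invertible, K = −(R+BᵀPB)⁻¹BᵀPA, and P satisfies the discrete-time algebraic Riccati equation P = AᵀPA + Q − AᵀPB(R+BᵀPB)⁻¹BᵀPA. -/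

import Mathlib

open Matrix

noncomputable section

/-- Stationary points of the discrete-time LQR cost (with positive-definite Lyapunov
variable) are given by the Riccati solution. -/
theorem stmt_13 {n m : ℕ}
    (A : Matrix (Fin n) (Fin n) ℝ) (B : Matrix (Fin n) (Fin m) ℝ)
    (Q W X P : Matrix (Fin n) (Fin n) ℝ)
    (R : Matrix (Fin m) (Fin m) ℝ)
    (K : Matrix (Fin m) (Fin n) ℝ)
    (hQ : Q.PosSemidef) (hR : R.PosDef) (hW : W.IsHermitian)
    (hX : X.PosDef)
    (hXEq : (A + B * K) * X * (A + B * K)ᵀ - X + W = 0)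
    (hP : P.PosSemidef)
    (hPEq : (A + B * K)ᵀ * P * (A + B * K) - P + Q + Kᵀ * R * K = 0)
    (hStat : ((R + Bᵀ * P * B) * K + Bᵀ * P * A) * X = 0) :
    IsUnit (R + Bᵀ * P * B) ∧
      K = -((R + Bᵀ * P * B)⁻¹ * Bᵀ * P * A) ∧
      P = Aᵀ * P * A + Q - Aᵀ * P * B * (R + Bᵀ * P * B)⁻¹ * Bᵀ * P * A := by
  have hPT : Pᵀ = P := by
    have := hP.isHermitian
    exact (by simpa [Matrix.conjTranspose_eq_transpose_of_trivial] using this : P.IsSymm)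
  have hBPB : (Bᵀ * P * B).PosSemidef := by
    have := hP.conjTranspose_mul_mul_same B
    simpa [Matrix.conjTranspose_eq_transpose_of_trivial] using this
  have hS : (R + Bᵀ * P * B).PosDef := hR.add_posSemidef hBPB
  have hSU : IsUnit (R + Bᵀ * P * B) := hS.isUnit
  have hSUd : IsUnit (R + Bᵀ * P * B).det := (Matrix.isUnit_iff_isUnit_det _).mp hSU
  -- stationarity without X
  have hStat' : (R + Bᵀ * P * B) * K + Bᵀ * P * A = 0 := by
    have hXU : IsUnit X.det := (Matrix.isUnit_iff_isUnit_det X).mp hX.isUnit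
    have := congrArg (· * X⁻¹) hStat
    simpa [Matrix.mul_assoc, Matrix.mul_nonsing_inv X hXU] using this
  have hSK : (R + Bᵀ * P * B) * K = -(Bᵀ * P * A) := by
    linear_combination (norm := noncomm_ring) hStat'
  have hKeq : K = -((R + Bᵀ * P * B)⁻¹ * Bᵀ * P * A) := by
    have := congrArg ((R + Bᵀ * P * B)⁻¹ * ·) hSK
    simpa [← Matrix.mul_assoc, Matrix.nonsing_inv_mul _ hSUd] using this
  refine ⟨hSU, hKeq, ?_⟩
  -- expand hPEq with K substituted
  have hexp : P = Aᵀ * P * A + Q + Aᵀ * P * B * K + Kᵀ * Bᵀ * P * A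
      + Kᵀ * ((R + Bᵀ * P * B) * K) := by
    have h := hPEq
    have hX1 : (A + B * K)ᵀ * P * (A + B * K)
        = Aᵀ * P * A + Aᵀ * P * B * K + Kᵀ * Bᵀ * P * A + Kᵀ * Bᵀ * P * (B * K) := by
      simp only [Matrix.transpose_add, Matrix.transpose_mul, Matrix.add_mul, Matrix.mul_add,
        Matrix.mul_assoc]
      abel
    rw [hX1] at h
    have hRK : Kᵀ * ((R + Bᵀ * P * B) * K) = Kᵀ * R * K + Kᵀ * Bᵀ * P * (B * K) := by
      simp [Matrix.add_mul, Matrix.mul_add, Matrix.mul_assoc]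
    rw [hRK]
    linear_combination (norm := noncomm_ring) -h
  rw [hSK, hKeq] at hexp
  have hRT : Rᵀ = R := by
    have := hR.isHermitian
    exact (by simpa [Matrix.conjTranspose_eq_transpose_of_trivial] using this : R.IsSymm)
  have hSH : ((R + Bᵀ * P * B)⁻¹)ᵀ = (R + Bᵀ * P * B)⁻¹ := by
    rw [Matrix.transpose_nonsing_inv]
    congr 1
    simp [Matrix.transpose_add, Matrix.transpose_mul, hPT, hRT, Matrix.mul_assoc]
  have hKT : (-((R + Bᵀ * P * B)⁻¹ * Bᵀ * P * A))ᵀ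
      = -(Aᵀ * P * B * (R + Bᵀ * P * B)⁻¹) := by
    simp only [Matrix.transpose_neg, Matrix.transpose_mul, Matrix.transpose_transpose,
      hPT, hSH]
    simp [Matrix.mul_assoc]
  rw [hKT] at hexp
  have key : Aᵀ * P * B * -((R + Bᵀ * P * B)⁻¹ * Bᵀ * P * A)
      = -(Aᵀ * P * B * (R + Bᵀ * P * B)⁻¹ * Bᵀ * P * A) := by
    simp [Matrix.mul_assoc]
  have key2 : -(Aᵀ * P * B * (R + Bᵀ * P * B)⁻¹) * -(Bᵀ * P * A)
      = Aᵀ * P * B * (R + Bᵀ * P * B)⁻¹ * Bᵀ * P * A := by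
    simp [Matrix.mul_assoc]
  have key3 : -(Aᵀ * P * B * (R + Bᵀ * P * B)⁻¹) * Bᵀ * P * A
      = -(Aᵀ * P * B * (R + Bᵀ * P * B)⁻¹ * Bᵀ * P * A) := by
    simp [Matrix.mul_assoc]
  rw [key, key2, key3] at hexp
  exact hexp.trans (by abel)
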